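/- For every integer a ≥ 3, S(a) = T(a) ∪ {l_a, 2·l_a + 1} as subsets of ℕ, and moreover l_a ∉ T(a) and 2·l_a + 1 ∉ T(a). -/

import Mathlib

/-- The Lucas sequence: l 0 = 2, l 1 = 1, l (n+2) = l (n+1) + l n. -/
def lucas : ℕ → ℕ
  | 0 => 2
  | 1 => 1
  | n + 2 => lucas (n + 1) + lucas n

/-- The modified (monotone) Lucas sequence: l̃ 0 = 1, l̃ 1 = 2, l̃ n = l n for n ≥ 2. -/
def ltil : ℕ → ℕ
  | 0 => 1
  | 1 => 2
  | n + 2 => lucas (n + 2)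

/-- β x : minimal number of summands in a representation of x as a sum of
modified Lucas numbers (with repetitions allowed). -/
noncomputable def beta (x : ℕ) : ℕ :=
  sInf {s : ℕ | ∃ k : ℕ, ∃ b : ℕ → ℕ,
    x = ∑ i ∈ Finset.range (k + 1), b i * ltil i ∧ s = ∑ i ∈ Finset.range (k + 1), b i}

/-- γ x : the greatest k with l̃ k ≤ x (for x ≥ 1). -/
noncomputable def gamma (x : ℕ) : ℕ := sSup {k : ℕ | ltil k ≤ x}

/-- S a : the additive submonoid of ℕ generated by {l_a} ∪ {l_a + l_n : n ∈ ℕ}. -/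
def Sset (a : ℕ) : AddSubmonoid ℕ :=
  AddSubmonoid.closure ({lucas a} ∪ {x : ℕ | ∃ n : ℕ, x = lucas a + lucas n})

/-- T a : the additive submonoid of ℕ generated by {l_a + l_n : n ∈ ℕ}. -/
def Tset (a : ℕ) : AddSubmonoid ℕ :=
  AddSubmonoid.closure {x : ℕ | ∃ n : ℕ, x = lucas a + lucas n}

lemma lucas_pos : ∀ n, 0 < lucas n
  | 0 => by simp [lucas]
  | 1 => by simp [lucas]
  | n + 2 => by
      have := lucas_pos (n + 1)
      simp [lucas]; omega

lemma lucas_le_succ (n : ℕ) (h : 1 ≤ n) : lucas n ≤ lucas (n + 1) := by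
  obtain ⟨k, rfl⟩ : ∃ k, n = k + 1 := ⟨n - 1, by omega⟩
  have := lucas_pos k
  simp [lucas]

lemma lucas_mono {m n : ℕ} (hm : 1 ≤ m) (h : m ≤ n) : lucas m ≤ lucas n := by
  induction n, h using Nat.le_induction with
  | base => rfl
  | succ n hn ih => exact le_trans ih (lucas_le_succ n (le_trans hm hn))

lemma lucas_three_le {a : ℕ} (ha : 2 ≤ a) : 3 ≤ lucas a := by
  have := lucas_mono (by norm_num) ha
  simpa [lucas] using this

lemma lucas_four_le {a : ℕ} (ha : 3 ≤ a) : 4 ≤ lucas a := by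
  have := lucas_mono (by norm_num) ha
  have h3 : lucas 3 = 4 := by simp [lucas]
  omega

lemma lucas_ne_succ {a : ℕ} (ha : 3 ≤ a) (n : ℕ) : lucas n ≠ lucas a + 1 := by
  rcases le_or_gt n a with h | h
  · have : lucas n ≤ lucas a := by
      rcases Nat.eq_zero_or_pos n with rfl | hn
      · have := lucas_four_le ha; simp [lucas]; omega
      · exact lucas_mono hn h
    omega
  · obtain ⟨b, rfl⟩ : ∃ b, a = b + 3 := ⟨a - 3, by omega⟩
    have h1 : lucas (b + 4) ≤ lucas n := lucas_mono (by omega) (by omega)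
    have h2 : lucas (b + 4) = lucas (b + 3) + lucas (b + 2) := by simp [lucas]
    have h3 : 3 ≤ lucas (b + 2) := lucas_three_le (by omega)
    omega

lemma gen_mem (a n : ℕ) : lucas a + lucas n ∈ Tset a :=
  AddSubmonoid.subset_closure ⟨n, rfl⟩

/-- 2·l_a + l_n ∈ T for n ≠ 1. -/
lemma two_la_add_mem (a : ℕ) : ∀ n, n ≠ 1 → lucas a + lucas a + lucas n ∈ Tset a
  | 0, _ => by
      have h0 : lucas 0 = lucas 1 + lucas 1 := by simp [lucas]
      have := AddSubmonoid.add_mem _ (gen_mem a 1) (gen_mem a 1)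
      rw [h0]; convert this using 1; ring
  | 1, h => absurd rfl h
  | n + 2, _ => by
      have h0 : lucas (n + 2) = lucas (n + 1) + lucas n := by simp [lucas]
      have := AddSubmonoid.add_mem _ (gen_mem a (n + 1)) (gen_mem a n)
      rw [h0]; convert this using 1; ring

/-- 3·l_a + 2 ∈ T. -/
lemma three_la_two_mem {a : ℕ} (_ha : 3 ≤ a) :
    lucas a + lucas a + lucas a + 2 ∈ Tset a := by
  have h0 : lucas 0 = 2 := by simp [lucas]
  have := AddSubmonoid.add_mem _ (gen_mem a a) (gen_mem a 0)
  convert this using 1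
  omega

/-- Nonzero elements of T are ≥ l_a + 1, and ≠ 2 l_a + 1. -/
lemma T_bound {a : ℕ} (ha : 3 ≤ a) {t : ℕ} (ht : t ∈ Tset a) :
    t = 0 ∨ (lucas a + 1 ≤ t ∧ t ≠ 2 * lucas a + 1) := by
  induction ht using AddSubmonoid.closure_induction with
  | mem x hx =>
      obtain ⟨n, rfl⟩ := hx
      right
      have h1 := lucas_pos n
      have h2 := lucas_ne_succ ha n
      exact ⟨by omega, by omega⟩
  | zero => left; rfl
  | add x y hx hy ihx ihy =>
      rcases ihx with rfl | ⟨hx1, hx2⟩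
      · simpa using ihy
      rcases ihy with rfl | ⟨hy1, hy2⟩
      · right; simpa using ⟨hx1, hx2⟩
      · right; constructor <;> omega

/-- key lemma: adding l_a to a nonzero element of T other than l_a + 1 stays in T. -/
lemma key {a : ℕ} (ha : 3 ≤ a) {t : ℕ} (ht : t ∈ Tset a) (h0 : t ≠ 0)
    (h1 : t ≠ lucas a + 1) : lucas a + t ∈ Tset a := by
  induction ht using AddSubmonoid.closure_induction with
  | mem x hx =>
      obtain ⟨n, rfl⟩ := hx
      have hn : n ≠ 1 := by
        rintro rfl; exact h1 (by simp [lucas])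
      have := two_la_add_mem a n hn
      convert this using 1; ring
  | zero => exact absurd rfl h0
  | add x y hx hy ihx ihy =>
      rcases Nat.eq_zero_or_pos x with rfl | hxpos
      · simpa using ihy (by simpa using h0) (by simpa using h1)
      rcases Nat.eq_zero_or_pos y with rfl | hypos
      · simpa using ihx (by simpa using h0) (by simpa using h1)
      by_cases hx1 : x = lucas a + 1
      · by_cases hy1 : y = lucas a + 1
        · subst hx1; subst hy1
          have := three_la_two_mem ha
          convert this using 1; ring
        · have hy' := ihy (by omega) hy1
          have hx' : x ∈ Tset a := by
            subst hx1; simpa [lucas] using gen_mem a 1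
          have := AddSubmonoid.add_mem _ hx' hy'
          convert this using 1; ring
      · have hx' := ihx (by omega) hx1
        have := AddSubmonoid.add_mem _ hx' hy
        convert this using 1; ring

theorem S_eq_T_union (a : ℕ) (ha : 3 ≤ a) :
    (Sset a : Set ℕ) = (Tset a : Set ℕ) ∪ {lucas a, 2 * lucas a + 1} ∧
    lucas a ∉ Tset a ∧ 2 * lucas a + 1 ∉ Tset a := by
  have hla4 := lucas_four_le ha
  have hlaT : lucas a ∉ Tset a := by
    intro h
    rcases T_bound ha h with h0 | ⟨h1, _⟩ <;> omega
  have h2laT : 2 * lucas a + 1 ∉ Tset a := by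
    intro h
    rcases T_bound ha h with h0 | ⟨_, h2⟩ <;> omega
  refine ⟨?_, hlaT, h2laT⟩
  have hTsub : (Tset a : Set ℕ) ⊆ (Sset a : Set ℕ) :=
    AddSubmonoid.closure_mono (Set.subset_union_right)
  have hla1T : lucas a + 1 ∈ Tset a := by simpa [lucas] using gen_mem a 1
  apply Set.eq_of_subset_of_subset
  · intro x hx
    induction hx using AddSubmonoid.closure_induction with
    | mem x hx =>
        rcases hx with rfl | ⟨n, rfl⟩
        · right; left; rfl
        · left; exact gen_mem a n
    | zero => left; exact (Tset a).zero_mem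
    | add x y hx hy ihx ihy =>
        -- both in T ∪ {l_a, 2l_a+1}
        have step : ∀ u v : ℕ, u ∈ (Tset a : Set ℕ) ∪ {lucas a, 2 * lucas a + 1} →
            v ∈ (Tset a : Set ℕ) → (u + v) ∈ (Tset a : Set ℕ) ∪ {lucas a, 2 * lucas a + 1} := by
          intro u v hu hv
          rcases hu with hu | hu
          · exact Or.inl (AddSubmonoid.add_mem _ hu hv)
          rcases hu with rfl | rfl
          · -- u = lucas a
            rcases T_bound ha hv with rfl | ⟨hv1, _⟩
            · right; left; rfl
            by_cases hv2 : v = lucas a + 1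
            · subst hv2; right; right; show _ = _; ring
            · exact Or.inl (key ha hv (by omega) hv2)
          · -- u = 2 * lucas a + 1
            rcases T_bound ha hv with rfl | ⟨hv1, _⟩
            · right; right; rfl
            have hv' : v + (lucas a + 1) ∈ Tset a := AddSubmonoid.add_mem _ hv hla1T
            have := key ha hv' (by omega) (by omega)
            left
            show 2 * lucas a + 1 + v ∈ Tset a
            convert this using 1; ring
        rcases ihy with ihy | ihy
        · exact step x y ihx ihy
        · rcases ihx with ihx | ihx
          · rw [add_comm x y]; exact step y x (Or.inr ihy) ihx
          rcases ihx with rfl | rfl <;> rcases ihy with rfl | rfl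
          · -- l_a + l_a
            exact Or.inl (gen_mem a a)
          · -- l_a + (2l_a+1) = 3l_a + 1 = (l_a+l_a) + (l_a + l_1)
            left
            have := AddSubmonoid.add_mem _ (gen_mem a a) (gen_mem a 1)
            convert this using 1; simp [lucas]; ring
          · left
            have := AddSubmonoid.add_mem _ (gen_mem a a) (gen_mem a 1)
            convert this using 1; simp [lucas]; ring
          · -- (2l_a+1)+(2l_a+1) = 4l_a+2 = (l_a+l_a)+(l_a+l_1)+(l_a+l_1)
            left
            have := AddSubmonoid.add_mem _ (AddSubmonoid.add_mem _ (gen_mem a a) (gen_mem a 1)) (gen_mem a 1)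
            convert this using 1; simp [lucas]; ring
  · intro x hx
    rcases hx with hx | hx
    · exact hTsub hx
    rcases hx with rfl | rfl
    · exact AddSubmonoid.subset_closure (Or.inl rfl)
    · have h1 : lucas a ∈ Sset a := AddSubmonoid.subset_closure (Or.inl rfl)
      have h2 : lucas a + lucas 1 ∈ Sset a :=
        AddSubmonoid.subset_closure (Or.inr ⟨1, rfl⟩)
      have := AddSubmonoid.add_mem _ h1 h2
      convert this using 1; simp [lucas]; ring
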